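/- Let p be an odd prime, and let r, t be non-negative integers with r ≥ t, r - t even, and t_0 ≠ p - 1 (where t_0 is the 0-th base-p digit of t). If (N, σ, δ, I) is an admissible quadruple for the pair (r, t) with N ≥ 1, then either 0 ∈ I and σ_0 = p - 1 - t_0, or 0 ∉ I and σ_0 = t_0 + 1. -/
import Mathlib


/-- The `i`-th digit of the base-`p` expansion of `n`. -/
def digit (p n i : ℕ) : ℕ := n / p ^ i % p

/-- `σ_I = ∑_{i ∈ I} p^i σ_i`. -/
def digitSum (p σ : ℕ) (I : Finset ℕ) : ℕ := ∑ i ∈ I, p ^ i * digit p σ i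

/-- An admissible triple `(N, σ, δ)`. -/
def AdmissibleTriple (p N σ δ : ℕ) : Prop :=
  σ < p ^ (N + 1) - p ^ N ∧ δ < p ^ (N + 1) - p ^ N ∧
  (∀ i < N, digit p σ i + digit p δ i ≤ p - 1) ∧
  digit p σ N + digit p δ N < p - 1

/-- An admissible quadruple `(N, σ, δ, I)`. -/
def AdmissibleQuadruple (p N σ δ : ℕ) (I : Finset ℕ) : Prop :=
  AdmissibleTriple p N σ δ ∧ ∀ i ∈ I, digit p σ i ≠ 0 ∧ i ≠ N

/-- An admissible quadruple for the pair `(r, t)`. -/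
def AdmissibleQuadrupleFor (p r t N σ δ : ℕ) (I : Finset ℕ) : Prop :=
  AdmissibleQuadruple p N σ δ I ∧
  t + 2 * digitSum p σ I = p ^ N - 1 + σ ∧
  r ≡ p ^ N - 1 + σ + 2 * δ [MOD 2 * p ^ (N + 1)]

theorem stmt_11 (p : ℕ) (hp : p.Prime) (hodd : Odd p) (r t : ℕ) (hrt : t ≤ r)
    (hev : Even (r - t)) (ht0 : digit p t 0 ≠ p - 1)
    (N σ δ : ℕ) (I : Finset ℕ)
    (h : AdmissibleQuadrupleFor p r t N σ δ I) (hN : 1 ≤ N) :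
    (0 ∈ I ∧ digit p σ 0 = p - 1 - digit p t 0) ∨
    (0 ∉ I ∧ digit p σ 0 = digit p t 0 + 1) := by
  obtain ⟨-, heq, -⟩ := h
  classical
  have hp1 : 1 < p := hp.one_lt
  haveI : NeZero p := ⟨by omega⟩
  have hdt : digit p t 0 = t % p := by simp [digit]
  have hdσ : digit p σ 0 = σ % p := by simp [digit]
  have h1 : (1:ℕ) ≤ p ^ N := Nat.one_le_pow _ _ (by omega)
  have heq' : t + 2 * digitSum p σ I + 1 = p ^ N + σ := by omega
  have hcast : (t : ZMod p) + 2 * (digitSum p σ I : ℕ) + 1 = (σ : ℕ) := by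
    have := congrArg (fun n : ℕ => (n : ZMod p)) heq'
    push_cast at this
    rw [ZMod.natCast_self, zero_pow (by omega)] at this
    simpa using this
  rw [← ZMod.natCast_mod t p, ← ZMod.natCast_mod σ p] at hcast
  have hds : (digitSum p σ I : ZMod p) = if 0 ∈ I then ((σ % p : ℕ) : ZMod p) else 0 := by
    unfold digitSum
    push_cast
    rw [ZMod.natCast_self]
    simp only [zero_pow_eq, ite_mul, one_mul, zero_mul]
    rw [Finset.sum_ite_eq' I 0 (fun i => ((digit p σ i : ZMod p)))]
    simp [hdσ]
  have htlt : t % p < p := Nat.mod_lt _ (by omega)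
  have hσlt : σ % p < p := Nat.mod_lt _ (by omega)
  by_cases hI : 0 ∈ I
  · left
    refine ⟨hI, ?_⟩
    rw [hds, if_pos hI] at hcast
    have hz : ((t % p + (σ % p) + 1 : ℕ) : ZMod p) = 0 := by
      push_cast
      linear_combination hcast
    have hdvd : p ∣ t % p + σ % p + 1 := (ZMod.natCast_eq_zero_iff _ _).mp hz
    have hle : p ≤ t % p + σ % p + 1 := Nat.le_of_dvd (by omega) hdvd
    have hx : t % p + σ % p + 1 - p = 0 :=
      Nat.eq_zero_of_dvd_of_lt (Nat.dvd_sub hdvd (Nat.dvd_refl p)) (by omega)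
    rw [hdσ, hdt]; omega
  · right
    refine ⟨hI, ?_⟩
    rw [hds, if_neg hI] at hcast
    have hz : ((t % p + 1 : ℕ) : ZMod p) = ((σ % p : ℕ) : ZMod p) := by
      push_cast
      linear_combination hcast
    have hmod : (t % p + 1) % p = (σ % p) % p := (ZMod.natCast_eq_natCast_iff _ _ _).mp hz
    rw [Nat.mod_mod_of_dvd σ dvd_rfl] at hmod
    rw [hdσ, hdt]
    by_cases hlast : t % p + 1 = p
    · exfalso; apply ht0; rw [hdt]; omega
    · rw [Nat.mod_eq_of_lt (by omega)] at hmod; omega
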